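/- Consequently, if N₀(θ₀) ≠ 0 (i.e., f(θ₀) ≠ 0 at a point where γ₁(θ₀) = γ₂(θ₀)), the operator N(θ₀) = -i f(θ₀) μ₀^{-1/2}r(θ₀)μ₀^{-1/2} restricted to J⁰_{θ₀} has the two real eigenvalues μ_{1,2}(θ₀) = ± f(θ₀) ⟨μ₀θ₀, θ₀⟩^{1/2} / (det μ₀)^{1/2}. -/
import Mathlib

open Matrix

/-- The cross-product matrix `r(θ)`, satisfying `r(θ) v = θ × v`. -/
def crossMatrix (θ : Fin 3 → ℝ) : Matrix (Fin 3) (Fin 3) ℝ :=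
  !![0, -θ 2, θ 1; θ 2, 0, -θ 0; -θ 1, θ 0, 0]

lemma cross_conj (M : Matrix (Fin 3) (Fin 3) ℝ) (v : Fin 3 → ℝ) :
    Mᵀ * crossMatrix (M *ᵥ v) * M = M.det • crossMatrix v := by
  ext i j
  fin_cases i <;> fin_cases j <;>
    simp [crossMatrix, Matrix.mul_apply, Matrix.mulVec, dotProduct,
      Fin.sum_univ_three, Matrix.det_fin_three] <;> ring

lemma exists_perp (a : Fin 3 → ℝ) (ha : a ≠ 0) :
    ∃ p : Fin 3 → ℝ, p ≠ 0 ∧ a 0 * p 0 + a 1 * p 1 + a 2 * p 2 = 0 := by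
  by_cases h0 : a 0 = 0
  · exact ⟨![1, 0, 0], by
      intro h; have := congr_fun h 0; simp at this, by simp [h0]⟩
  · refine ⟨![a 1, -a 0, 0], ?_, by simp; ring⟩
    intro h; have := congr_fun h 1; simp at this; exact h0 this

lemma mapC_mul (A B : Matrix (Fin 3) (Fin 3) ℝ) :
    (A * B).map Complex.ofReal = A.map Complex.ofReal * B.map Complex.ofReal := by
  ext i j
  simp [Matrix.mul_apply, Matrix.map_apply]

/-- if `f(θ₀) ≠ 0` (the case `N₀(θ₀) ≠ 0`, occurring at a point where
`γ₁(θ₀) = γ₂(θ₀)`), then `N(θ₀) = -i f(θ₀) μ₀^{-1/2} r(θ₀) μ₀^{-1/2}` restricted to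
`J⁰_{θ₀} = {μ₀^{1/2} c : ⟨μ₀ c, θ₀⟩ = 0}` has the two real eigenvalues
`μ_{1,2}(θ₀) = ± f(θ₀) ⟨μ₀θ₀,θ₀⟩^{1/2} / (det μ₀)^{1/2}`.  Here `s = μ₀^{1/2}`. -/
theorem N_eigenvalues_on_solenoidal_subspace
    (μ₀ s : Matrix (Fin 3) (Fin 3) ℝ)
    (hμ₀ : μ₀.PosDef) (hμ₀symm : μ₀.IsSymm)
    (hs : s.PosDef) (hssymm : s.IsSymm) (hsq : s * s = μ₀)
    (f : ℝ) (hf : f ≠ 0)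
    (θ₀ : Fin 3 → ℝ) (hθ₀ : ∑ i, θ₀ i ^ 2 = 1) :
    let N : Matrix (Fin 3) (Fin 3) ℂ :=
      (-(f : ℂ) * Complex.I) • ((s⁻¹ * crossMatrix θ₀ * s⁻¹).map Complex.ofReal);
    let J : Set (Fin 3 → ℂ) :=
      {v | ∃ c : Fin 3 → ℂ, v = (s.map Complex.ofReal) *ᵥ c
        ∧ ((μ₀.map Complex.ofReal) *ᵥ c) ⬝ᵥ (fun i => (θ₀ i : ℂ)) = 0};
    let μ₁ : ℝ := f * Real.sqrt ((μ₀ *ᵥ θ₀) ⬝ᵥ θ₀) / Real.sqrt μ₀.det;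
    (∃ v ∈ J, v ≠ 0 ∧ N *ᵥ v = (μ₁ : ℂ) • v)
      ∧ (∃ v ∈ J, v ≠ 0 ∧ N *ᵥ v = (-μ₁ : ℂ) • v)
      ∧ ∀ (γ : ℂ) (v : Fin 3 → ℂ), v ∈ J → v ≠ 0 → N *ᵥ v = γ • v →
          γ = (μ₁ : ℂ) ∨ γ = (-μ₁ : ℂ) := by
  intro N J μ₁
  have hdets : 0 < s.det := hs.det_pos
  have hsu : IsUnit s.det := isUnit_iff_ne_zero.2 hdets.ne'
  have hsT : sᵀ = s := hssymm
  set a : Fin 3 → ℝ := s *ᵥ θ₀ with ha_def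
  have hθ0ne : θ₀ ≠ 0 := by
    intro h; rw [h] at hθ₀; simp at hθ₀
  have ha : a ≠ 0 := by
    intro h
    apply hθ0ne
    have : s⁻¹ *ᵥ (s *ᵥ θ₀) = θ₀ := by
      rw [Matrix.mulVec_mulVec, Matrix.nonsing_inv_mul s hsu, Matrix.one_mulVec]
    rw [← this, ← ha_def, h, Matrix.mulVec_zero]
  have hdetμ : μ₀.det = s.det ^ 2 := by rw [← hsq, Matrix.det_mul]; ring
  have hsqrtdet : Real.sqrt μ₀.det = s.det := by rw [hdetμ, Real.sqrt_sq hdets.le]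
  have haa : a ⬝ᵥ a = (μ₀ *ᵥ θ₀) ⬝ᵥ θ₀ := by
    rw [ha_def, Matrix.dotProduct_mulVec, ← Matrix.mulVec_transpose, hsT,
      Matrix.mulVec_mulVec, hsq]
  set L : ℝ := Real.sqrt (a ⬝ᵥ a) with hL_def
  have haan : 0 ≤ a ⬝ᵥ a := by
    simp only [dotProduct]
    exact Finset.sum_nonneg fun i _ => mul_self_nonneg _
  have hL2 : L ^ 2 = a ⬝ᵥ a := Real.sq_sqrt haan
  have haapos : 0 < a ⬝ᵥ a :=
    lt_of_le_of_ne haan (fun h => ha ((dotProduct_self_eq_zero).mp h.symm))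
  have hLpos : 0 < L := Real.sqrt_pos.2 haapos
  have hμ₁ : μ₁ = f * L / s.det := by
    simp only [μ₁, hL_def, haa, hsqrtdet]
  have key : s * crossMatrix a * s = s.det • crossMatrix θ₀ := by
    have := cross_conj s θ₀; rwa [hsT] at this
  have hNmat : s⁻¹ * crossMatrix θ₀ * s⁻¹ = s.det⁻¹ • crossMatrix a := by
    have h1 : crossMatrix θ₀ = s.det⁻¹ • (s * crossMatrix a * s) := by
      rw [key, smul_smul, inv_mul_cancel₀ hdets.ne', one_smul]
    rw [h1, Matrix.mul_smul, Matrix.smul_mul]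
    congr 1
    calc s⁻¹ * (s * crossMatrix a * s) * s⁻¹
        = (s⁻¹ * s) * crossMatrix a * (s * s⁻¹) := by noncomm_ring
      _ = crossMatrix a := by
          rw [Matrix.nonsing_inv_mul s hsu, Matrix.mul_nonsing_inv s hsu,
            Matrix.one_mul, Matrix.mul_one]
  set c₀ : ℂ := -(f : ℂ) * Complex.I * ((s.det : ℝ) : ℂ)⁻¹ with hc₀_def
  have hdetsC : ((s.det : ℝ) : ℂ) ≠ 0 := by exact_mod_cast hdets.ne'
  have hc₀ : c₀ ≠ 0 := by
    simp only [hc₀_def]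
    apply mul_ne_zero (mul_ne_zero _ Complex.I_ne_zero) (inv_ne_zero hdetsC)
    simpa using hf
  set R : Matrix (Fin 3) (Fin 3) ℂ := (crossMatrix a).map Complex.ofReal with hR_def
  have hNC : N = c₀ • R := by
    show (-(f : ℂ) * Complex.I) • ((s⁻¹ * crossMatrix θ₀ * s⁻¹).map Complex.ofReal) = _
    rw [hNmat]
    ext i j
    simp only [Matrix.smul_apply, Matrix.map_apply, smul_eq_mul, hc₀_def, hR_def]
    push_cast
    ring
  have hSmul : (s.map Complex.ofReal) * (s⁻¹.map Complex.ofReal) = 1 := by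
    rw [← mapC_mul, Matrix.mul_nonsing_inv s hsu]
    exact Matrix.map_one _ Complex.ofReal_zero Complex.ofReal_one
  have haC : (fun i => ((a i : ℝ) : ℂ)) = (s.map Complex.ofReal) *ᵥ (fun i => ((θ₀ i : ℝ) : ℂ)) := by
    funext i
    simp only [ha_def, Matrix.mulVec, dotProduct, Fin.sum_univ_three, Matrix.map_apply]
    push_cast
    ring
  have hST : (s.map Complex.ofReal)ᵀ = s.map Complex.ofReal := by
    rw [← Matrix.transpose_map, hsT]
  have hM₀ : (μ₀.map Complex.ofReal) = (s.map Complex.ofReal) * (s.map Complex.ofReal) := by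
    rw [← mapC_mul, hsq]
  have memJ : ∀ v : Fin 3 → ℂ, v ∈ J ↔ v ⬝ᵥ (fun i => ((a i : ℝ) : ℂ)) = 0 := by
    intro v
    constructor
    · rintro ⟨c, rfl, hc⟩
      rw [haC, Matrix.dotProduct_mulVec, ← Matrix.mulVec_transpose, hST,
        Matrix.mulVec_mulVec, ← hM₀]
      exact hc
    · intro hv
      refine ⟨(s⁻¹.map Complex.ofReal) *ᵥ v, ?_, ?_⟩
      · rw [Matrix.mulVec_mulVec, hSmul, Matrix.one_mulVec]
      · have h1 : (μ₀.map Complex.ofReal) * (s⁻¹.map Complex.ofReal) = s.map Complex.ofReal := by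
          rw [← mapC_mul]
          congr 1
          rw [← hsq, Matrix.mul_assoc, Matrix.mul_nonsing_inv s hsu, Matrix.mul_one]
        rw [Matrix.mulVec_mulVec, h1, ← hST, Matrix.mulVec_transpose,
          ← Matrix.dotProduct_mulVec, ← haC]
        exact hv
  -- eigenvectors
  obtain ⟨p, hpne, hap⟩ := exists_perp a ha
  set q : Fin 3 → ℝ := ![a 1 * p 2 - a 2 * p 1, a 2 * p 0 - a 0 * p 2, a 0 * p 1 - a 1 * p 0]
    with hq_def
  have hapC : (a 0 : ℂ) * p 0 + (a 1 : ℂ) * p 1 + (a 2 : ℂ) * p 2 = 0 := by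
    have := congrArg (Complex.ofReal) hap
    push_cast at this
    convert this using 2 <;> push_cast <;> ring
  have hL2' : L ^ 2 = a 0 ^ 2 + a 1 ^ 2 + a 2 ^ 2 := by
    rw [hL2]; simp [dotProduct, Fin.sum_univ_three]; ring
  have hL2C : ((L : ℝ) : ℂ) ^ 2 = (a 0 : ℂ) ^ 2 + (a 1 : ℂ) ^ 2 + (a 2 : ℂ) ^ 2 := by
    have := congrArg (Complex.ofReal) hL2'
    push_cast at this
    exact_mod_cast this
  obtain ⟨ip, hip⟩ : ∃ i, p i ≠ 0 := by
    by_contra h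
    push_neg at h
    exact hpne (funext fun i => h i)
  have mk_eigen : ∀ ε : ℝ, ε = 1 ∨ ε = -1 →
      ∃ v ∈ J, v ≠ 0 ∧ N *ᵥ v = ((ε * (-μ₁) : ℝ) : ℂ) • v := by
    intro ε hε
    set z : Fin 3 → ℂ := fun j => ((L * p j : ℝ) : ℂ) + (ε : ℂ) * Complex.I * ((q j : ℝ) : ℂ)
      with hz_def
    have hε2 : (ε : ℂ) ^ 2 = 1 := by
      rcases hε with h | h <;> rw [h] <;> push_cast <;> ring
    have hI : Complex.I ^ 2 = -1 := Complex.I_sq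
    have hz : R *ᵥ z = (-(L : ℂ) * (ε : ℂ) * Complex.I) • z := by
      funext j
      fin_cases j <;>
        (simp [hR_def, crossMatrix, Matrix.mulVec, dotProduct, Fin.sum_univ_three,
          Matrix.map_apply, hz_def, hq_def]; push_cast)
      · linear_combination (norm := (push_cast; ring1)) (ε : ℂ) * Complex.I * (a 0 : ℂ) * hapC +
          (ε : ℂ) * Complex.I * (p 0 : ℂ) * hL2C -
          (L : ℂ) * ((a 1 : ℂ) * (p 2 : ℂ) - (a 2 : ℂ) * (p 1 : ℂ)) * hε2 +
          (L : ℂ) * (ε : ℂ) ^ 2 * ((a 1 : ℂ) * (p 2 : ℂ) - (a 2 : ℂ) * (p 1 : ℂ)) * hI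
      · linear_combination (norm := (push_cast; ring1)) (ε : ℂ) * Complex.I * (a 1 : ℂ) * hapC +
          (ε : ℂ) * Complex.I * (p 1 : ℂ) * hL2C -
          (L : ℂ) * ((a 2 : ℂ) * (p 0 : ℂ) - (a 0 : ℂ) * (p 2 : ℂ)) * hε2 +
          (L : ℂ) * (ε : ℂ) ^ 2 * ((a 2 : ℂ) * (p 0 : ℂ) - (a 0 : ℂ) * (p 2 : ℂ)) * hI
      · linear_combination (norm := (push_cast; ring1)) (ε : ℂ) * Complex.I * (a 2 : ℂ) * hapC +
          (ε : ℂ) * Complex.I * (p 2 : ℂ) * hL2C -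
          (L : ℂ) * ((a 0 : ℂ) * (p 1 : ℂ) - (a 1 : ℂ) * (p 0 : ℂ)) * hε2 +
          (L : ℂ) * (ε : ℂ) ^ 2 * ((a 0 : ℂ) * (p 1 : ℂ) - (a 1 : ℂ) * (p 0 : ℂ)) * hI
    refine ⟨z, (memJ z).2 ?_, ?_, ?_⟩
    · simp only [dotProduct, Fin.sum_univ_three, hz_def, hq_def, Matrix.cons_val_zero,
        Matrix.cons_val_one, Matrix.head_cons, Matrix.cons_val_two, Matrix.tail_cons]
      push_cast
      linear_combination (norm := (push_cast; ring1)) (L : ℂ) * hapC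
    · intro h
      have := congrArg Complex.re (congr_fun h ip)
      simp [hz_def, Complex.add_re, Complex.mul_re] at this
      rcases this with h' | h'
      · exact hLpos.ne' h'
      · exact hip h'
    · rw [hNC, Matrix.smul_mulVec, hz, smul_smul]
      congr 1
      rw [hc₀_def, hμ₁]
      have hI : Complex.I ^ 2 = -1 := Complex.I_sq
      push_cast
      field_simp
      linear_combination (ε : ℂ) * (f : ℂ) * (L : ℂ) * hI
  refine ⟨?_, ?_, ?_⟩
  · obtain ⟨v, h1, h2, h3⟩ := mk_eigen (-1) (Or.inr rfl)
    exact ⟨v, h1, h2, by convert h3 using 2; push_cast; ring⟩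
  · obtain ⟨v, h1, h2, h3⟩ := mk_eigen 1 (Or.inl rfl)
    exact ⟨v, h1, h2, by convert h3 using 2; push_cast; ring⟩
  -- uniqueness
  · intro γ v hvJ hvne hNv
    have hv0 : v ⬝ᵥ (fun i => ((a i : ℝ) : ℂ)) = 0 := (memJ v).1 hvJ
    set lam : ℂ := c₀⁻¹ * γ with hlam
    have hRv : R *ᵥ v = lam • v := by
      have h2 : c₀ • (R *ᵥ v) = γ • v := by
        rw [← Matrix.smul_mulVec, ← hNC]; exact hNv
      calc R *ᵥ v = c₀⁻¹ • (c₀ • (R *ᵥ v)) := by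
            rw [smul_smul, inv_mul_cancel₀ hc₀, one_smul]
        _ = c₀⁻¹ • (γ • v) := by rw [h2]
        _ = lam • v := by rw [smul_smul]
    have hdet0 : (R - lam • 1).det = 0 := by
      rw [← Matrix.exists_mulVec_eq_zero_iff]
      exact ⟨v, hvne, by
        rw [Matrix.sub_mulVec, Matrix.smul_mulVec, Matrix.one_mulVec, hRv, sub_self]⟩
    have hdetval : (R - lam • 1).det
        = -(lam * (lam ^ 2 + ((a 0 : ℂ) ^ 2 + (a 1 : ℂ) ^ 2 + (a 2 : ℂ) ^ 2))) := by
      simp [hR_def, Matrix.det_fin_three, crossMatrix, Matrix.map_apply, Matrix.sub_apply,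
        Matrix.smul_apply, Matrix.one_apply, smul_eq_mul]
      ring
    have hchar : lam * (lam ^ 2 + ((a 0 : ℂ) ^ 2 + (a 1 : ℂ) ^ 2 + (a 2 : ℂ) ^ 2)) = 0 := by
      have h3 := hdet0
      rw [hdetval] at h3
      linear_combination -h3
    have hD : v 0 * (a 0 : ℂ) + v 1 * (a 1 : ℂ) + v 2 * (a 2 : ℂ) = 0 := by
      simpa [dotProduct, Fin.sum_univ_three] using hv0
    rcases mul_eq_zero.mp hchar with h0 | h2
    · exfalso
      have hRv0 : R *ᵥ v = 0 := by rw [hRv, h0, zero_smul]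
      have hE0 : -(a 2 : ℂ) * v 1 + (a 1 : ℂ) * v 2 = 0 := by
        have := congr_fun hRv0 0
        simpa [hR_def, crossMatrix, Matrix.mulVec, dotProduct, Fin.sum_univ_three,
          Matrix.map_apply] using this
      have hE1 : (a 2 : ℂ) * v 0 - (a 0 : ℂ) * v 2 = 0 := by
        have := congr_fun hRv0 1
        have h' : (a 2 : ℂ) * v 0 + -(a 0 : ℂ) * v 2 = 0 := by
          simpa [hR_def, crossMatrix, Matrix.mulVec, dotProduct, Fin.sum_univ_three,
            Matrix.map_apply] using this
        linear_combination h'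
      have hE2 : -(a 1 : ℂ) * v 0 + (a 0 : ℂ) * v 1 = 0 := by
        have := congr_fun hRv0 2
        simpa [hR_def, crossMatrix, Matrix.mulVec, dotProduct, Fin.sum_univ_three,
          Matrix.map_apply] using this
      have hS : ((a 0 : ℂ) ^ 2 + (a 1 : ℂ) ^ 2 + (a 2 : ℂ) ^ 2) ≠ 0 := by
        intro h
        rw [← hL2C] at h
        have : (L : ℝ) = 0 := by exact_mod_cast pow_eq_zero_iff (n := 2) (by norm_num) |>.mp h
        exact hLpos.ne' this
      apply hvne
      funext j
      fin_cases j
      · have h4 : ((a 0 : ℂ) ^ 2 + (a 1 : ℂ) ^ 2 + (a 2 : ℂ) ^ 2) * v 0 = 0 := by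
          linear_combination (a 0 : ℂ) * hD + (a 2 : ℂ) * hE1 - (a 1 : ℂ) * hE2
        simpa [hS] using h4
      · have h4 : ((a 0 : ℂ) ^ 2 + (a 1 : ℂ) ^ 2 + (a 2 : ℂ) ^ 2) * v 1 = 0 := by
          linear_combination (a 1 : ℂ) * hD + (a 0 : ℂ) * hE2 - (a 2 : ℂ) * hE0
        simpa [hS] using h4
      · have h4 : ((a 0 : ℂ) ^ 2 + (a 1 : ℂ) ^ 2 + (a 2 : ℂ) ^ 2) * v 2 = 0 := by
          linear_combination (a 2 : ℂ) * hD + (a 1 : ℂ) * hE0 - (a 0 : ℂ) * hE1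
        simpa [hS] using h4
    · -- lam ^ 2 = -(a·a)
      have hγ : γ = c₀ * lam := by rw [hlam, ← mul_assoc, mul_inv_cancel₀ hc₀, one_mul]
      have hγ2 : γ ^ 2 = ((μ₁ : ℝ) : ℂ) ^ 2 := by
        have hlam2 : lam ^ 2 = -((a 0 : ℂ) ^ 2 + (a 1 : ℂ) ^ 2 + (a 2 : ℂ) ^ 2) := by
          linear_combination h2
        rw [hγ, mul_pow, hlam2, hμ₁, hc₀_def]
        have hI : Complex.I ^ 2 = -1 := Complex.I_sq
        push_cast
        field_simp
        linear_combination (norm := (push_cast; ring1)) (-(f : ℂ) ^ 2 * ((a 0 : ℂ) ^ 2 + (a 1 : ℂ) ^ 2 + (a 2 : ℂ) ^ 2)) * hI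
          - (f : ℂ) ^ 2 * hL2C
      have hfac : (γ - ((μ₁ : ℝ) : ℂ)) * (γ + ((μ₁ : ℝ) : ℂ)) = 0 := by
        linear_combination hγ2
      rcases mul_eq_zero.mp hfac with h | h
      · left; linear_combination h
      · right; push_cast; linear_combination h
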